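/- arXiv:2010.15008 — 9 statements merged into one kernel-verified Lean document; each statement's English description precedes it below -/
import Mathlib

section
/- Fix n ≥ 1, a receiver strategy g and a type λ ∈ Λ, and let Ī_λ be the λ-partition of the image of g. Then the minimum over best responses s ∈ B(g,λ) of the number of perfectly recovered sequences equals |Ī_λ|, i.e. min_{s ∈ B(g,λ)} |D(g,s)| = |Ī_λ|. -/
noncomputable section

namespace IE

/-- The `n`-letter utility: `U_n(x̂, x, λ) = (1/n) ∑ᵢ U(x̂ᵢ, xᵢ, λ)`. -/
def Un {X Λ : Type*} [Fintype X] (U : X → X → Λ → ℝ) (n : ℕ)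
    (xh x : Fin n → X) (t : Λ) : ℝ :=
  (1 / (n : ℝ)) * ∑ i, U (xh i) (x i) t

/-- The `λ`-partition of a set `I ⊆ X^n`. -/
def lamPart {X Λ : Type*} [Fintype X] (U : X → X → Λ → ℝ) (n : ℕ)
    (I : Set (Fin n → X)) (t : Λ) : Set (Fin n → X) :=
  {x | x ∈ I ∧ ∀ y ∈ I, y ≠ x → Un U n x x t > Un U n y x t}

/-- The best-response set of sender type `λ` to a receiver strategy `g`. -/
def BR {X Λ : Type*} [Fintype X] (U : X → X → Λ → ℝ) (n : ℕ)
    (g : (Fin n → X) → (Fin n → X)) (t : Λ) :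
    Set ((Fin n → X) → (Fin n → X)) :=
  {s | ∀ x : Fin n → X, ∀ s' : (Fin n → X) → (Fin n → X),
    Un U n (g (s x)) x t ≥ Un U n (g (s' x)) x t}

/-- The set of perfectly recovered sequences `D(g,s)`. -/
def Drec {X : Type*} (n : ℕ) (g s : (Fin n → X) → (Fin n → X)) :
    Set (Fin n → X) :=
  {x | g (s x) = x}

/-- `min_{s ∈ B(g,λ)} |D(g,s)|`. -/
def minD {X Λ : Type*} [Fintype X] (U : X → X → Λ → ℝ) (n : ℕ)
    (g : (Fin n → X) → (Fin n → X)) (t : Λ) : ℕ :=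
  sInf ((fun s => (Drec n g s).ncard) '' BR U n g t)

/-- `D*(g) = ∑_λ P(λ) · min_{s ∈ B(g,λ)} |D(g,s)|`. -/
def Dstar {X Λ : Type*} [Fintype X] [Fintype Λ] (U : X → X → Λ → ℝ)
    (P : Λ → ℝ) (n : ℕ) (g : (Fin n → X) → (Fin n → X)) : ℝ :=
  ∑ t, P t * (minD U n g t : ℝ)

/-- The sender graph `G_λ^n` on `X^n`. -/
def senderGraph {X Λ : Type*} [Fintype X] (U : X → X → Λ → ℝ) (n : ℕ)
    (t : Λ) : SimpleGraph (Fin n → X) where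
  Adj x y := x ≠ y ∧ (Un U n x x t ≤ Un U n y x t ∨ Un U n y y t ≤ Un U n x y t)
  symm := by
    constructor
    intro x y h
    exact ⟨h.1.symm, h.2.symm⟩
  loopless := by
    constructor
    intro x h
    exact h.1 rfl

/-- The single-letter sender graph `G_λ` on `X`. -/
def senderGraph1 {X Λ : Type*} (U : X → X → Λ → ℝ) (t : Λ) :
    SimpleGraph X where
  Adj x y := x ≠ y ∧ (U x x t ≤ U y x t ∨ U y y t ≤ U x y t)
  symm := by
    constructor
    intro x y h
    exact ⟨h.1.symm, h.2.symm⟩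
  loopless := by
    constructor
    intro x h
    exact h.1 rfl

/-- A set of vertices is independent in a graph. -/
def IsIndep {V : Type*} (G : SimpleGraph V) (s : Set V) : Prop :=
  ∀ ⦃x⦄, x ∈ s → ∀ ⦃y⦄, y ∈ s → ¬ G.Adj x y

/-- The independence number `α(G)` of a graph on a finite vertex set. -/
def alpha {V : Type*} [Fintype V] (G : SimpleGraph V) : ℕ :=
  sSup {k | ∃ s : Set V, IsIndep G s ∧ s.ncard = k}

end IE

/-- `min_{s ∈ B(g,λ)} |D(g,s)| = |Ī_λ|`, where `Ī_λ` is the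
`λ`-partition of the image of `g`. -/
theorem stmt3 {X Λ : Type*} [Fintype X] [Nonempty X] [Fintype Λ] [Nonempty Λ]
    (U : X → X → Λ → ℝ) (n : ℕ) (hn : 1 ≤ n)
    (g : (Fin n → X) → (Fin n → X)) (t : Λ) :
    IE.minD U n g t = (IE.lamPart U n (Set.range g) t).ncard := by
  classical
  set I : Set (Fin n → X) := Set.range g with hI
  set P : Set (Fin n → X) := IE.lamPart U n I t with hP
  have hIfin : I.Finite := Set.toFinite _
  have hIne : I.Nonempty := Set.range_nonempty g
  -- pointwise choice of target
  have key : ∀ x : Fin n → X, ∃ m, m ∈ I ∧ (∀ w ∈ I, IE.Un U n w x t ≤ IE.Un U n m x t) ∧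
      (m = x ↔ x ∈ P) := by
    intro x
    by_cases hx : x ∈ P
    · refine ⟨x, hx.1, ?_, by simp [hx]⟩
      intro w hw
      by_cases hwx : w = x
      · simp [hwx]
      · exact le_of_lt (hx.2 w hw hwx)
    · obtain ⟨m, hm, hmax⟩ := Set.exists_max_image I (fun w => IE.Un U n w x t) hIfin hIne
      by_cases hxI : x ∈ I
      · -- x ∈ I but not in P: some y ≠ x with Un y x ≥ Un x x
        have : ∃ y ∈ I, y ≠ x ∧ IE.Un U n x x t ≤ IE.Un U n y x t := by
          by_contra h
          push_neg at h
          exact hx ⟨hxI, fun y hy hyx => h y hy hyx⟩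
        obtain ⟨y, hy, hyx, hyU⟩ := this
        by_cases hmx : m = x
        · refine ⟨y, hy, ?_, by simp [hyx, hx]⟩
          intro w hw
          calc IE.Un U n w x t ≤ IE.Un U n m x t := hmax w hw
            _ = IE.Un U n x x t := by rw [hmx]
            _ ≤ IE.Un U n y x t := hyU
        · exact ⟨m, hm, hmax, by simp [hmx, hx]⟩
      · refine ⟨m, hm, hmax, ?_⟩
        constructor
        · intro h; exact absurd (h ▸ hm) hxI
        · intro h; exact absurd h hx
  choose y hyI hymax hyiff using key
  -- build sender strategy
  have hpre : ∀ x : Fin n → X, ∃ w, g w = y x := fun x => hyI x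
  choose s hs using hpre
  have hsBR : s ∈ IE.BR U n g t := by
    intro x s'
    rw [hs x]
    exact hymax x (g (s' x)) ⟨s' x, rfl⟩
  have hD : IE.Drec n g s = P := by
    ext x
    simp only [IE.Drec, Set.mem_setOf_eq, hs x]
    exact hyiff x
  -- lower bound: for any best response, P ⊆ D
  have hlow : ∀ s' ∈ IE.BR U n g t, P ⊆ IE.Drec n g s' := by
    intro s' hs' x hxP
    obtain ⟨w, hw⟩ := hxP.1
    have h1 := hs' x (fun _ => w)
    rw [hw] at h1
    by_contra hne
    have : IE.Un U n x x t > IE.Un U n (g (s' x)) x t :=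
      hxP.2 _ ⟨s' x, rfl⟩ hne
    exact absurd h1 (not_le_of_gt this)
  -- conclude
  have hmem : P.ncard ∈ (fun s => (IE.Drec n g s).ncard) '' IE.BR U n g t :=
    ⟨s, hsBR, by simp only [hD]⟩
  refine le_antisymm (Nat.sInf_le hmem) (le_csInf ⟨_, hmem⟩ ?_)
  rintro k ⟨s', hs', rfl⟩
  exact Set.ncard_le_ncard (hlow s' hs') (Set.toFinite _)
end
end

section
/- (Theorem 1.) Fix n ≥ 1 and a receiver strategy g, and for each λ ∈ Λ let Ī_λ^n be the λ-partition of the image of g. Then D*(g) = ∑_{λ∈Λ} P(λ)·|Ī_λ^n|. -/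
noncomputable section

namespace IE

lemma minD_eq {X Λ : Type*} [Fintype X] [Nonempty X]
    (U : X → X → Λ → ℝ) (n : ℕ) (g : (Fin n → X) → (Fin n → X)) (t : Λ) :
    minD U n g t = (lamPart U n (Set.range g) t).ncard := by
  classical
  set I : Set (Fin n → X) := Set.range g with hI
  have hfin : I.Finite := Set.toFinite I
  have hne : I.Nonempty := Set.range_nonempty g
  -- choose a "pick" function
  have hpick : ∀ x : Fin n → X, ∃ y, y ∈ I ∧ (∀ z ∈ I, Un U n z x t ≤ Un U n y x t) ∧
      (y = x ↔ x ∈ lamPart U n I t) := by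
    intro x
    by_cases hx : x ∈ lamPart U n I t
    · refine ⟨x, hx.1, ?_, by simp [hx]⟩
      intro z hz
      rcases eq_or_ne z x with rfl | hzx
      · exact le_refl _
      · exact le_of_lt (hx.2 z hz hzx)
    · obtain ⟨y₀, hy₀I, hy₀max⟩ := Set.exists_max_image I (fun z => Un U n z x t) hfin hne
      rcases eq_or_ne y₀ x with heq | hyx
      · -- x ∈ I but not in lamPart: get a competing maximizer z ≠ x
        rw [heq] at hy₀I hy₀max
        have : ∃ z ∈ I, z ≠ x ∧ Un U n x x t ≤ Un U n z x t := by
          by_contra h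
          push_neg at h
          exact hx ⟨hy₀I, fun z hz hzx => h z hz hzx⟩
        obtain ⟨z, hzI, hzx, hzle⟩ := this
        refine ⟨z, hzI, ?_, by simp [hzx, hx]⟩
        intro w hw
        exact le_trans (hy₀max w hw) hzle
      · exact ⟨y₀, hy₀I, hy₀max, by simp [hyx, hx]⟩
  choose pick hpickI hpickmax hpickiff using hpick
  have hs₀ : ∀ x, ∃ z, g z = pick x := fun x => hpickI x
  choose s₀ hs₀g using hs₀
  have hs₀BR : s₀ ∈ BR U n g t := by
    intro x s'
    rw [hs₀g x]
    exact hpickmax x (g (s' x)) ⟨s' x, rfl⟩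
  have hDrec : Drec n g s₀ = lamPart U n I t := by
    ext x
    simp only [Drec, Set.mem_setOf_eq, hs₀g x]
    exact hpickiff x
  have hsub : ∀ s ∈ BR U n g t, lamPart U n I t ⊆ Drec n g s := by
    intro s hs x hx
    obtain ⟨z, hz⟩ := hx.1
    have hge := hs x (fun _ => z)
    rw [hz] at hge
    by_contra hne'
    have hmem : g (s x) ∈ I := ⟨s x, rfl⟩
    exact absurd hge (not_le.mpr (hx.2 _ hmem hne'))
  -- compute the sInf
  have hm : (lamPart U n I t).ncard ∈ (fun s => (Drec n g s).ncard) '' BR U n g t :=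
    ⟨s₀, hs₀BR, by simp only [hDrec]⟩
  refine le_antisymm (Nat.sInf_le hm) (le_csInf ⟨_, hm⟩ ?_)
  rintro k ⟨s, hs, rfl⟩
  exact Set.ncard_le_ncard (hsub s hs) (Set.toFinite _)

end IE

/-- Theorem 1: `D*(g) = ∑_λ P(λ)·|Ī_λ^n|`, with `Ī_λ^n` the
`λ`-partition of the image of `g`. -/
theorem stmt4 {X Λ : Type*} [Fintype X] [Nonempty X] [Fintype Λ] [Nonempty Λ]
    (U : X → X → Λ → ℝ) (P : Λ → ℝ) (hP0 : ∀ t, 0 ≤ P t) (hP1 : ∑ t, P t = 1)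
    (n : ℕ) (hn : 1 ≤ n) (g : (Fin n → X) → (Fin n → X)) :
    IE.Dstar U P n g
      = ∑ t, P t * ((IE.lamPart U n (Set.range g) t).ncard : ℝ) := by
  unfold IE.Dstar
  exact Finset.sum_congr rfl fun t _ => by rw [IE.minD_eq]
end
end

section
/- Fix n ≥ 1. For every nonempty subset I ⊆ X^n there exists a receiver strategy g with image(g) = I (e.g. g equal to the identity on I and constant equal to some fixed element of I off I) such that D*(g) = ∑_{λ∈Λ} P(λ)·|Ī_λ|, where Ī_λ is the λ-partition of I. -/
noncomputable section

/-- for every nonempty `I ⊆ X^n` there is a receiver strategy `g` with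
image `I` achieving `D*(g) = ∑_λ P(λ)·|Ī_λ|`. -/
theorem stmt5 {X Λ : Type*} [Fintype X] [Nonempty X] [Fintype Λ] [Nonempty Λ]
    (U : X → X → Λ → ℝ) (P : Λ → ℝ) (hP0 : ∀ t, 0 ≤ P t) (hP1 : ∑ t, P t = 1)
    (n : ℕ) (hn : 1 ≤ n) (I : Set (Fin n → X)) (hI : I.Nonempty) :
    ∃ g : (Fin n → X) → (Fin n → X), Set.range g = I ∧
      IE.Dstar U P n g = ∑ t, P t * ((IE.lamPart U n I t).ncard : ℝ) := by
  classical
  obtain ⟨x0, hx0⟩ := hI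
  set g : (Fin n → X) → (Fin n → X) := fun x => if x ∈ I then x else x0 with hg
  have hgI : ∀ x, g x ∈ I := by
    intro x; by_cases h : x ∈ I <;> simp [hg, h, hx0]
  have hgid : ∀ x ∈ I, g x = x := by intro x h; simp [hg, h]
  have key : ∀ t : Λ, IE.minD U n g t = (IE.lamPart U n I t).ncard := by
    intro t
    have hLP : IE.lamPart U n I t ⊆ I := fun x hx => hx.1
    have hex : ∀ x : Fin n → X, ∃ y, y ∈ I ∧ (∀ z ∈ I, IE.Un U n z x t ≤ IE.Un U n y x t) ∧
        (x ∉ IE.lamPart U n I t → y ≠ x) := by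
      intro x
      obtain ⟨m, hmI, hm⟩ := Set.exists_max_image I (fun y => IE.Un U n y x t)
        (Set.toFinite I) ⟨x0, hx0⟩
      by_cases hx : x ∈ IE.lamPart U n I t
      · exact ⟨m, hmI, hm, fun h => absurd hx h⟩
      · by_cases hxI : x ∈ I
        · have hy0 : ∃ y0 ∈ I, y0 ≠ x ∧ IE.Un U n x x t ≤ IE.Un U n y0 x t := by
            by_contra hc
            push_neg at hc
            exact hx ⟨hxI, fun y hy hne => hc y hy hne⟩
          obtain ⟨y0, hy0I, hy0ne, hy0le⟩ := hy0
          by_cases hmx : m = x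
          · refine ⟨y0, hy0I, fun z hz => ?_, fun _ => hy0ne⟩
            calc IE.Un U n z x t ≤ IE.Un U n m x t := hm z hz
              _ = IE.Un U n x x t := by rw [hmx]
              _ ≤ IE.Un U n y0 x t := hy0le
          · exact ⟨m, hmI, hm, fun _ => hmx⟩
        · exact ⟨m, hmI, hm, fun _ h => hxI (h ▸ hmI)⟩
    choose sb hs1 hs2 hs3 using hex
    set s0 : (Fin n → X) → (Fin n → X) :=
      fun x => if x ∈ IE.lamPart U n I t then x else sb x with hs0
    have hs0def : ∀ x, s0 x = if x ∈ IE.lamPart U n I t then x else sb x := fun _ => rfl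
    have hs0I : ∀ x, s0 x ∈ I := by
      intro x
      by_cases h : x ∈ IE.lamPart U n I t
      · rw [hs0def, if_pos h]; exact hLP h
      · rw [hs0def, if_neg h]; exact hs1 x
    have hs0max : ∀ x, ∀ z ∈ I, IE.Un U n z x t ≤ IE.Un U n (s0 x) x t := by
      intro x z hz
      by_cases h : x ∈ IE.lamPart U n I t
      · rw [hs0def, if_pos h]
        rcases eq_or_ne z x with rfl | hne
        · exact le_rfl
        · exact le_of_lt (h.2 z hz hne)
      · rw [hs0def, if_neg h]
        exact hs2 x z hz
    have hs0eq : ∀ x, s0 x = x ↔ x ∈ IE.lamPart U n I t := by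
      intro x
      constructor
      · intro hx
        by_contra h
        have hsb : sb x = x := by rw [hs0def x, if_neg h] at hx; exact hx
        exact hs3 x h hsb
      · intro h; rw [hs0def, if_pos h]
    have hBR : s0 ∈ IE.BR U n g t := by
      intro x s'
      have h1 : g (s0 x) = s0 x := hgid _ (hs0I x)
      rw [h1]
      exact hs0max x _ (hgI (s' x))
    have hD0 : IE.Drec n g s0 = IE.lamPart U n I t := by
      ext x
      have h1 : g (s0 x) = s0 x := hgid _ (hs0I x)
      simp only [IE.Drec, Set.mem_setOf_eq, h1]
      exact hs0eq x
    have hlow : ∀ s ∈ IE.BR U n g t, IE.lamPart U n I t ⊆ IE.Drec n g s := by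
      intro s hs x hx
      have h1 : IE.Un U n (g (s x)) x t ≥ IE.Un U n (g x) x t := hs x id
      rw [hgid x hx.1] at h1
      by_contra hne
      have hgs : g (s x) ∈ I := hgI _
      have : IE.Un U n x x t > IE.Un U n (g (s x)) x t := hx.2 _ hgs hne
      exact absurd h1 (not_le.mpr this)
    unfold IE.minD
    apply le_antisymm
    · have hmem : (IE.lamPart U n I t).ncard ∈
          (fun s => (IE.Drec n g s).ncard) '' IE.BR U n g t :=
        ⟨s0, hBR, by show (IE.Drec n g s0).ncard = _; rw [hD0]⟩
      exact Nat.sInf_le hmem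
    · refine le_csInf ⟨_, Set.mem_image_of_mem _ hBR⟩ ?_
      rintro b ⟨s, hs, rfl⟩
      exact Set.ncard_le_ncard (hlow s hs) (Set.toFinite _)
  refine ⟨g, ?_, ?_⟩
  · apply subset_antisymm
    · rintro _ ⟨x, rfl⟩; exact hgI x
    · intro x hx; exact ⟨x, hgid x hx⟩
  · unfold IE.Dstar
    exact Finset.sum_congr rfl fun t _ => by rw [key t]
end
end

section
/- (Theorem 2.) Fix n ≥ 1. The maximum of D*(g) over all receiver strategies g equals the maximum over nonempty subsets I ⊆ X^n of ∑_{λ∈Λ} P(λ)·|Ī_λ|, where Ī_λ is the λ-partition of I. In particular, every Stackelberg equilibrium strategy g* satisfies D*(g*) = max_{I ⊆ X^n, I ≠ ∅} ∑_{λ∈Λ} P(λ)·|Ī_λ|. -/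
noncomputable section

open IE

section Helpers
open scoped Classical

variable {X Λ : Type*} [Fintype X] [Nonempty X]
  (U : X → X → Λ → ℝ) (n : ℕ)

/-- There is a best response whose recovered set is inside the λ-partition of `range g`. -/
lemma exists_br_subset (g : (Fin n → X) → (Fin n → X)) (t : Λ) :
    ∃ s ∈ BR U n g t, Drec n g s ⊆ lamPart U n (Set.range g) t := by
  classical
  set I : Set (Fin n → X) := Set.range g with hI
  have hIfin : I.Finite := Set.toFinite _
  have hIne : I.Nonempty := Set.range_nonempty g
  -- maximizer predicate
  have hmax : ∀ x : Fin n → X, ∃ y ∈ I, ∀ z ∈ I, Un U n z x t ≤ Un U n y x t := by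
    intro x
    exact Set.exists_max_image I (fun z => Un U n z x t) hIfin hIne
  -- choose a maximizer, preferring one different from x
  let Q : (Fin n → X) → (Fin n → X) → Prop := fun x y =>
    (y ∈ I ∧ ∀ z ∈ I, Un U n z x t ≤ Un U n y x t) ∧ y ≠ x
  let y : (Fin n → X) → (Fin n → X) := fun x =>
    if h : ∃ w, Q x w then h.choose else (hmax x).choose
  have hyP : ∀ x, y x ∈ I ∧ ∀ z ∈ I, Un U n z x t ≤ Un U n (y x) x t := by
    intro x
    by_cases h : ∃ w, Q x w
    · simpa [y, h] using (h.choose_spec).1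
    · have := (hmax x).choose_spec
      simp only [y, h, dif_neg, not_false_iff]
      exact ⟨this.1, this.2⟩
  -- s x is a preimage of y x
  have hpre : ∀ x, ∃ z, g z = y x := fun x => (hyP x).1
  refine ⟨fun x => (hpre x).choose, ?_, ?_⟩
  · intro x s'
    have hg : g ((hpre x).choose) = y x := (hpre x).choose_spec
    rw [hg]
    exact (hyP x).2 _ ⟨s' x, rfl⟩
  · intro x hx
    have hg : g ((hpre x).choose) = y x := (hpre x).choose_spec
    have hyx : y x = x := by rw [← hg]; exact hx
    have hnoQ : ¬ ∃ w, Q x w := by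
      intro h
      have := (h.choose_spec).2
      have : y x ≠ x := by simpa [y, h] using this
      exact this hyx
    have hxI : x ∈ I := hyx ▸ (hyP x).1
    have hmaxx : ∀ z ∈ I, Un U n z x t ≤ Un U n x x t := by
      have := (hyP x).2; rwa [hyx] at this
    refine ⟨hxI, ?_⟩
    intro z hz hzx
    by_contra hle
    push_neg at hle
    exact hnoQ ⟨z, ⟨⟨hz, fun w hw => le_trans (hmaxx w hw) hle⟩, hzx⟩⟩

lemma minD_le (g : (Fin n → X) → (Fin n → X)) (t : Λ) :
    minD U n g t ≤ (lamPart U n (Set.range g) t).ncard := by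
  obtain ⟨s, hs, hsub⟩ := exists_br_subset U n g t
  refine le_trans (Nat.sInf_le ⟨s, hs, rfl⟩) ?_
  exact Set.ncard_le_ncard hsub (Set.toFinite _)

/-- The canonical receiver strategy for a nonempty set `I`. -/
def gOf (I : Set (Fin n → X)) (hIne : I.Nonempty) : (Fin n → X) → (Fin n → X) :=
  fun x => if x ∈ I then x else hIne.choose

lemma range_gOf (I : Set (Fin n → X)) (hIne : I.Nonempty) :
    Set.range (gOf n I hIne) = I := by
  classical
  apply Set.Subset.antisymm
  · rintro _ ⟨x, rfl⟩
    by_cases h : x ∈ I <;> simp [gOf, h, hIne.choose_spec]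
  · intro x hx
    exact ⟨x, by simp [gOf, hx]⟩

lemma minD_gOf (I : Set (Fin n → X)) (hIne : I.Nonempty) (t : Λ) :
    minD U n (gOf n I hIne) t = (lamPart U n I t).ncard := by
  classical
  set g := gOf n I hIne with hg
  have hrange := range_gOf n I hIne
  obtain ⟨s0, hs0, hsub0⟩ := exists_br_subset U n g t
  apply le_antisymm
  · have := minD_le U n g t
    rwa [hrange] at this
  · apply le_csInf ⟨_, Set.mem_image_of_mem _ hs0⟩
    rintro b ⟨s, hs, rfl⟩
    apply Set.ncard_le_ncard _ (Set.toFinite _)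
    intro x hx
    -- x ∈ lamPart I t; show g (s x) = x
    have hxI : x ∈ I := hx.1
    have hgsx : g (s x) ∈ I := hrange ▸ ⟨s x, rfl⟩
    have hgx : g x = x := by simp [g, gOf, hxI]
    have hge : Un U n (g (s x)) x t ≥ Un U n x x t := by
      have := hs x (fun _ => x)
      rwa [hgx] at this
    by_contra hne
    have := hx.2 (g (s x)) hgsx hne
    exact absurd hge (not_le.mpr this)

end Helpers


/-- Theorem 2: every Stackelberg equilibrium strategy `g*` attains the
maximum over nonempty `I ⊆ X^n` of `∑_λ P(λ)·|Ī_λ|`. -/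
theorem stmt6 {X Λ : Type*} [Fintype X] [Nonempty X] [Fintype Λ] [Nonempty Λ]
    (U : X → X → Λ → ℝ) (P : Λ → ℝ) (hP0 : ∀ t, 0 ≤ P t) (hP1 : ∑ t, P t = 1)
    (n : ℕ) (hn : 1 ≤ n)
    (gstar : (Fin n → X) → (Fin n → X))
    (hstar : ∀ g : (Fin n → X) → (Fin n → X), IE.Dstar U P n g ≤ IE.Dstar U P n gstar) :
    IsGreatest
      {v : ℝ | ∃ I : Set (Fin n → X), I.Nonempty ∧
        v = ∑ t, P t * ((IE.lamPart U n I t).ncard : ℝ)}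
      (IE.Dstar U P n gstar) := by
  have hD : ∀ (I : Set (Fin n → X)) (hI : I.Nonempty),
      IE.Dstar U P n (gOf n I hI) = ∑ t, P t * ((IE.lamPart U n I t).ncard : ℝ) := by
    intro I hI
    unfold IE.Dstar
    refine Finset.sum_congr rfl fun t _ => ?_
    rw [minD_gOf]
  have hub : ∀ g : (Fin n → X) → (Fin n → X),
      IE.Dstar U P n g ≤ ∑ t, P t * ((IE.lamPart U n (Set.range g) t).ncard : ℝ) := by
    intro g
    refine Finset.sum_le_sum fun t _ => ?_
    exact mul_le_mul_of_nonneg_left (Nat.cast_le.mpr (minD_le U n g t)) (hP0 t)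
  constructor
  · refine ⟨Set.range gstar, Set.range_nonempty gstar, ?_⟩
    refine le_antisymm (hub gstar) ?_
    rw [← hD (Set.range gstar) (Set.range_nonempty gstar)]
    exact hstar _
  · rintro v ⟨I, hI, rfl⟩
    rw [← hD I hI]
    exact hstar _
end
end

section
/- (Corollary 1, lower bound.) Fix n ≥ 1. For every Stackelberg equilibrium strategy g_n* of the receiver, D*(g_n*) ≥ α(∪_{λ∈Λ} G_λ^n); equivalently the rate satisfies R(g_n*) ≥ α(∪_{λ∈Λ} G_λ^n)^{1/n}. -/
noncomputable section

/-- Corollary 1, lower bound: `D*(g_n*) ≥ α(∪_λ G_λ^n)`, equivalently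
`R(g_n*) ≥ α(∪_λ G_λ^n)^{1/n}`. -/
theorem stmt9 {X Λ : Type*} [Fintype X] [Nonempty X] [Fintype Λ] [Nonempty Λ]
    (U : X → X → Λ → ℝ) (P : Λ → ℝ) (hP0 : ∀ t, 0 ≤ P t) (hP1 : ∑ t, P t = 1)
    (n : ℕ) (hn : 1 ≤ n)
    (gstar : (Fin n → X) → (Fin n → X))
    (hstar : ∀ g : (Fin n → X) → (Fin n → X), IE.Dstar U P n g ≤ IE.Dstar U P n gstar) :
    (IE.alpha (⨆ t : Λ, IE.senderGraph U n t) : ℝ) ≤ IE.Dstar U P n gstar ∧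
      (IE.alpha (⨆ t : Λ, IE.senderGraph U n t) : ℝ) ^ ((1 : ℝ) / n)
        ≤ IE.Dstar U P n gstar ^ ((1 : ℝ) / n) := by
  classical
  let V := (Fin n → X)
  set G := ⨆ t : Λ, IE.senderGraph U n t with hG
  set S := {k | ∃ s : Set V, IE.IsIndep G s ∧ s.ncard = k} with hS
  have hbdd : BddAbove S := by
    refine ⟨Nat.card V, ?_⟩
    rintro k ⟨s, _, rfl⟩
    simpa [Set.ncard_univ] using Set.ncard_le_ncard (Set.subset_univ s) Set.finite_univ
  have hne : S.Nonempty :=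
    ⟨0, ∅, fun x hx => absurd hx (Set.notMem_empty x), by simp⟩
  obtain ⟨A, hA, hAcard⟩ := Nat.sSup_mem hne hbdd
  have halpha : IE.alpha G = A.ncard := hAcard.symm
  obtain ⟨v⟩ : Nonempty V := inferInstance
  have h1 : 1 ≤ IE.alpha G := by
    apply le_csSup hbdd
    refine ⟨{v}, ?_, by simp⟩
    intro x hx y hy
    rw [Set.mem_singleton_iff] at hx hy
    subst hx; subst hy; exact G.irrefl
  have hAne : A.Nonempty := by
    rw [← Set.ncard_pos (Set.toFinite A), hAcard]
    exact h1
  obtain ⟨a0, ha0⟩ := hAne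
  set g : V → V := fun x => if x ∈ A then x else a0 with hg
  have hgA : ∀ z : V, g z ∈ A := by
    intro z
    by_cases h : z ∈ A
    · simp [hg, h]
    · simp [hg, h, ha0]
  -- key bound: for every t, alpha ≤ minD
  have hkey : ∀ t : Λ, IE.alpha G ≤ IE.minD U n g t := by
    intro t
    have hBRne : (IE.BR U n g t).Nonempty := by
      refine ⟨fun x => (Finite.exists_max (fun z : V => IE.Un U n (g z) x t)).choose, ?_⟩
      intro x s'
      exact (Finite.exists_max (fun z : V => IE.Un U n (g z) x t)).choose_spec (s' x)
    have hsub : ∀ s ∈ IE.BR U n g t, A ⊆ IE.Drec n g s := by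
      intro s hs x hx
      have hgx : g x = x := by simp [hg, hx]
      have hle : IE.Un U n x x t ≤ IE.Un U n (g (s x)) x t := by
        have := hs x (fun _ => x)
        rwa [hgx] at this
      by_contra hne'
      have hyx : g (s x) ≠ x := hne'
      have hadj : G.Adj x (g (s x)) := by
        rw [hG, SimpleGraph.iSup_adj]
        exact ⟨t, fun h => hyx h.symm, Or.inl hle⟩
      exact hA hx (hgA (s x)) hadj
    refine le_csInf (hBRne.image _) ?_
    rintro m ⟨s, hs, rfl⟩
    calc IE.alpha G = A.ncard := halpha
      _ ≤ (IE.Drec n g s).ncard := Set.ncard_le_ncard (hsub s hs) (Set.toFinite _)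
  have hmain : (IE.alpha G : ℝ) ≤ IE.Dstar U P n gstar := by
    have h2 : (IE.alpha G : ℝ) ≤ IE.Dstar U P n g := by
      calc (IE.alpha G : ℝ) = ∑ t, P t * (IE.alpha G : ℝ) := by
            rw [← Finset.sum_mul, hP1, one_mul]
        _ ≤ ∑ t, P t * (IE.minD U n g t : ℝ) := by
            refine Finset.sum_le_sum fun t _ => ?_
            exact mul_le_mul_of_nonneg_left (Nat.cast_le.2 (hkey t)) (hP0 t)
        _ = IE.Dstar U P n g := rfl
    exact h2.trans (hstar g)
  exact ⟨hmain, Real.rpow_le_rpow (by positivity) hmain (by positivity)⟩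
end
end

section
/- For every n ≥ 1, the independence number of the n-letter union sender graph satisfies α(∪_{λ∈Λ} G_λ^n) ≥ (α(∪_{λ∈Λ} G_λ))^n. -/
noncomputable section

/-- `α(∪_λ G_λ^n) ≥ (α(∪_λ G_λ))^n` for every `n ≥ 1`. -/
theorem stmt12 {X Λ : Type*} [Fintype X] [Nonempty X] [Fintype Λ] [Nonempty Λ]
    (U : X → X → Λ → ℝ) (n : ℕ) (hn : 1 ≤ n) :
    (IE.alpha (⨆ t : Λ, IE.senderGraph1 U t)) ^ n
      ≤ IE.alpha (⨆ t : Λ, IE.senderGraph U n t) := by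

  classical
  -- bound on the achievable set
  have bdd : ∀ (V : Type _) [Fintype V] (G : SimpleGraph V),
      BddAbove {k | ∃ s : Set V, IE.IsIndep G s ∧ s.ncard = k} := by
    intro V _ G
    refine ⟨Nat.card V, ?_⟩
    rintro k ⟨s, _, rfl⟩
    rw [← Set.ncard_univ]
    exact Set.ncard_le_ncard (Set.subset_univ s) Set.finite_univ
  -- alpha is achieved
  obtain ⟨S, hSind, hScard⟩ :
      ∃ S : Set X, IE.IsIndep (⨆ t : Λ, IE.senderGraph1 U t) S ∧
        S.ncard = IE.alpha (⨆ t : Λ, IE.senderGraph1 U t) := by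
    have hne : ({k | ∃ s : Set X, IE.IsIndep (⨆ t : Λ, IE.senderGraph1 U t) s ∧
        s.ncard = k} : Set ℕ).Nonempty :=
      ⟨0, ∅, fun x hx => absurd hx (Set.notMem_empty x), Set.ncard_empty X⟩
    have := Nat.sSup_mem hne (bdd X _)
    obtain ⟨S, h1, h2⟩ := this
    exact ⟨S, h1, h2⟩
  set T : Set (Fin n → X) := {x | ∀ i, x i ∈ S} with hT
  -- key: pointwise strict inequality from independence
  have key : ∀ t : Λ, ∀ a ∈ S, ∀ b ∈ S, a ≠ b →
      U b a t < U a a t := by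
    intro t a ha b hb hab
    have := hSind ha hb
    rw [SimpleGraph.iSup_adj] at this
    push_neg at this
    have h := this t
    simp only [IE.senderGraph1] at h
    by_contra hlt
    exact h ⟨hab, Or.inl (not_lt.mp hlt)⟩
  have hnpos : (0:ℝ) < n := by exact_mod_cast hn
  -- T independent in union of n-letter graphs
  have hTind : IE.IsIndep (⨆ t : Λ, IE.senderGraph U n t) T := by
    intro x hx y hy hadj
    rw [SimpleGraph.iSup_adj] at hadj
    obtain ⟨t, hxy, hor⟩ := hadj
    obtain ⟨j, hj⟩ : ∃ j, x j ≠ y j := by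
      by_contra h; push_neg at h; exact hxy (funext h)
    have sumlt : ∀ a b : Fin n → X, (∀ i, a i ∈ S) → (∀ i, b i ∈ S) →
        (∃ j, a j ≠ b j) → IE.Un U n b a t < IE.Un U n a a t := by
      intro a b ha hb ⟨j, hj⟩
      have : ∑ i, U (b i) (a i) t < ∑ i, U (a i) (a i) t := by
        apply Finset.sum_lt_sum
        · intro i _
          by_cases h : a i = b i
          · rw [h]
          · exact (key t (a i) (ha i) (b i) (hb i) h).le
        · exact ⟨j, Finset.mem_univ j, key t (a j) (ha j) (b j) (hb j) hj⟩
      unfold IE.Un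
      have h1n : (0:ℝ) < 1 / n := by positivity
      exact (mul_lt_mul_iff_right₀ h1n).mpr this
    rcases hor with h | h
    · exact absurd h (not_le.mpr (sumlt x y hx hy ⟨j, hj⟩))
    · exact absurd h (not_le.mpr (sumlt y x hy hx ⟨j, fun e => hj e.symm⟩))
  -- cardinality of T
  have hTcard : T.ncard = S.ncard ^ n := by
    have e : T ≃ (Fin n → S) :=
      { toFun := fun x i => ⟨x.1 i, x.2 i⟩
        invFun := fun f => ⟨fun i => (f i).1, fun i => (f i).2⟩
        left_inv := fun x => rfl
        right_inv := fun f => rfl }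
    rw [← Nat.card_coe_set_eq, Nat.card_congr e, Nat.card_fun,
      Nat.card_eq_fintype_card (α := Fin n), Fintype.card_fin,
      Nat.card_coe_set_eq]
  rw [← hScard, ← hTcard]
  exact le_csSup (bdd _ _) ⟨T, hTind, rfl⟩
end
end

section
/- (Theorem 3, lower bound.) For every sequence (g_n*)_{n≥1} of Stackelberg equilibrium strategies of the receiver, limsup_{n→∞} R(g_n*) ≥ α(∪_{λ∈Λ} G_λ). -/
noncomputable section

namespace IEAux

open IE

variable {X Λ : Type*} [Fintype X] [Nonempty X]

/-- Every best-response set is nonempty. -/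
lemma br_nonempty (U : X → X → Λ → ℝ) (n : ℕ)
    (g : (Fin n → X) → (Fin n → X)) (t : Λ) : (IE.BR U n g t).Nonempty := by
  have h : ∀ x : Fin n → X, ∃ z : Fin n → X,
      ∀ w, IE.Un U n (g w) x t ≤ IE.Un U n (g z) x t :=
    fun x => Finite.exists_max _
  choose s hs using h
  exact ⟨s, fun x s' => hs x (s' x)⟩

lemma minD_le (U : X → X → Λ → ℝ) (n : ℕ)
    (g : (Fin n → X) → (Fin n → X)) (t : Λ) :
    IE.minD U n g t ≤ Fintype.card X ^ n := by
  obtain ⟨s, hs⟩ := br_nonempty U n g t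
  refine le_trans (Nat.sInf_le ⟨s, hs, rfl⟩) ?_
  calc (IE.Drec n g s).ncard ≤ (Set.univ : Set (Fin n → X)).ncard :=
        Set.ncard_le_ncard (Set.subset_univ _) Set.finite_univ
    _ = Fintype.card X ^ n := by
        rw [Set.ncard_univ, Nat.card_eq_fintype_card]
        simp

lemma dstar_nonneg [Fintype Λ] (U : X → X → Λ → ℝ) (P : Λ → ℝ)
    (hP0 : ∀ t, 0 ≤ P t) (n : ℕ) (g : (Fin n → X) → (Fin n → X)) :
    0 ≤ IE.Dstar U P n g :=
  Finset.sum_nonneg fun t _ => mul_nonneg (hP0 t) (Nat.cast_nonneg _)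

lemma dstar_le [Fintype Λ] (U : X → X → Λ → ℝ) (P : Λ → ℝ)
    (hP0 : ∀ t, 0 ≤ P t) (hP1 : ∑ t, P t = 1) (n : ℕ)
    (g : (Fin n → X) → (Fin n → X)) :
    IE.Dstar U P n g ≤ (Fintype.card X : ℝ) ^ n := by
  calc IE.Dstar U P n g ≤ ∑ t, P t * (Fintype.card X : ℝ) ^ n := by
        refine Finset.sum_le_sum fun t _ => mul_le_mul_of_nonneg_left ?_ (hP0 t)
        exact_mod_cast Nat.cast_le.mpr (minD_le U n g t)
    _ = (Fintype.card X : ℝ) ^ n := by rw [← Finset.sum_mul, hP1, one_mul]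

end IEAux


private lemma rpow_pow_inv {a : ℝ} (ha : 0 ≤ a) {n : ℕ} (hn : n ≠ 0) :
    (a ^ n) ^ ((1 : ℝ) / n) = a := by
  rw [← Real.rpow_natCast a n, ← Real.rpow_mul ha, mul_one_div,
    div_self (by exact_mod_cast hn : (n : ℝ) ≠ 0), Real.rpow_one]

/-- Theorem 3, lower bound: for any sequence of Stackelberg
equilibrium strategies, `limsup_n R(g_n*) ≥ α(∪_λ G_λ)`. -/
theorem stmt13 {X Λ : Type*} [Fintype X] [Nonempty X] [Fintype Λ] [Nonempty Λ]
    (U : X → X → Λ → ℝ) (P : Λ → ℝ) (hP0 : ∀ t, 0 ≤ P t) (hP1 : ∑ t, P t = 1)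
    (gstar : ∀ n : ℕ, (Fin n → X) → (Fin n → X))
    (hstar : ∀ n : ℕ, 1 ≤ n → ∀ g : (Fin n → X) → (Fin n → X),
      IE.Dstar U P n g ≤ IE.Dstar U P n (gstar n)) :
    (IE.alpha (⨆ t : Λ, IE.senderGraph1 U t) : ℝ)
      ≤ Filter.limsup
          (fun n : ℕ => IE.Dstar U P n (gstar n) ^ ((1 : ℝ) / n)) Filter.atTop := by
  classical
  set G := ⨆ t : Λ, IE.senderGraph1 U t with hG
  set A := {k | ∃ s : Set X, IE.IsIndep G s ∧ s.ncard = k} with hA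
  have hbdd : BddAbove A := by
    refine ⟨Fintype.card X, fun k hk => ?_⟩
    obtain ⟨s, _, rfl⟩ := hk
    calc s.ncard ≤ (Set.univ : Set X).ncard :=
          Set.ncard_le_ncard (Set.subset_univ _) Set.finite_univ
      _ = Fintype.card X := by rw [Set.ncard_univ, Nat.card_eq_fintype_card]
  obtain ⟨x0⟩ := (inferInstance : Nonempty X)
  have h1mem : (1 : ℕ) ∈ A := by
    refine ⟨{x0}, ?_, Set.ncard_singleton x0⟩
    intro a ha b hb hadj
    rw [Set.mem_singleton_iff] at ha hb
    subst ha; subst hb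
    exact hadj.ne rfl
  have halpha_mem : IE.alpha G ∈ A := Nat.sSup_mem ⟨1, h1mem⟩ hbdd
  obtain ⟨S, hSind, hScard⟩ := halpha_mem
  have halpha1 : 1 ≤ IE.alpha G := le_csSup hbdd h1mem
  have hSne : S.Nonempty := by
    apply Set.nonempty_of_ncard_ne_zero
    omega
  obtain ⟨s0, hs0⟩ := hSne
  -- key single-letter fact from independence
  have key : ∀ a ∈ S, ∀ b ∈ S, a ≠ b → ∀ t,
      U b a t < U a a t ∧ U a b t < U b b t := by
    intro a ha b hb hab t
    have h := hSind ha hb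
    rw [hG, SimpleGraph.iSup_adj] at h
    push_neg at h
    have h2 : ¬ (a ≠ b ∧ (U a a t ≤ U b a t ∨ U b b t ≤ U a b t)) := h t
    push_neg at h2
    exact h2 hab
  -- the per-n bound
  have hmain : ∀ n : ℕ, 1 ≤ n →
      (IE.alpha G : ℝ) ≤ IE.Dstar U P n (gstar n) ^ ((1 : ℝ) / n) := by
    intro n hn
    have hnR : (0 : ℝ) < (n : ℝ) := by exact_mod_cast hn
    set Sn : Set (Fin n → X) := Set.pi Set.univ (fun _ => S) with hSn
    have hstrict : ∀ x ∈ Sn, ∀ y ∈ Sn, y ≠ x → ∀ t,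
        IE.Un U n y x t < IE.Un U n x x t := by
      intro x hx y hy hne t
      unfold IE.Un
      apply mul_lt_mul_of_pos_left _ (by positivity)
      apply Finset.sum_lt_sum
      · intro i _
        by_cases hxy : x i = y i
        · rw [hxy]
        · exact (key _ (hx i (Set.mem_univ i)) _ (hy i (Set.mem_univ i))
            hxy t).1.le
      · obtain ⟨i, hi⟩ := Function.ne_iff.mp hne
        refine ⟨i, Finset.mem_univ i, ?_⟩
        exact (key _ (hx i (Set.mem_univ i)) _ (hy i (Set.mem_univ i))
          (fun h => hi h.symm) t).1
    set g : (Fin n → X) → (Fin n → X) :=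
      fun x => if x ∈ Sn then x else (fun _ => s0) with hg
    have hgSn : ∀ x, g x ∈ Sn := by
      intro x
      by_cases h : x ∈ Sn
      · simpa [hg, h] using h
      · simp only [hg, h, if_false]
        intro i _
        exact hs0
    have hgid : ∀ x ∈ Sn, g x = x := fun x hx => if_pos hx
    have hD : ∀ t, ∀ s ∈ IE.BR U n g t, Sn ⊆ IE.Drec n g s := by
      intro t s hs x hx
      have h1 : IE.Un U n (g (s x)) x t ≥ IE.Un U n (g (id x)) x t := hs x id
      rw [show id x = x from rfl, hgid x hx] at h1
      show g (s x) = x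
      by_contra hne
      have h2 := hstrict x hx (g (s x)) (hgSn _) hne t
      linarith
    have hSncard : Sn.ncard = (IE.alpha G) ^ n := by
      rw [← hScard, ← Nat.card_coe_set_eq, ← Nat.card_coe_set_eq]
      rw [hSn, Nat.card_congr (Equiv.Set.univPi (fun _ : Fin n => S))]
      rw [Nat.card_fun]
      congr 1
      simp [Nat.card_eq_fintype_card]
    have hminD : ∀ t, (IE.alpha G) ^ n ≤ IE.minD U n g t := by
      intro t
      refine le_csInf ((IEAux.br_nonempty U n g t).image _) ?_
      rintro b ⟨s, hs, rfl⟩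
      have h1 : Sn.ncard ≤ (IE.Drec n g s).ncard :=
        Set.ncard_le_ncard (hD t s hs) (Set.toFinite _)
      rw [hSncard] at h1
      exact h1
    have hDg : ((IE.alpha G : ℝ)) ^ n ≤ IE.Dstar U P n g := by
      have : ((IE.alpha G : ℝ)) ^ n = ∑ t, P t * ((IE.alpha G : ℝ)) ^ n := by
        rw [← Finset.sum_mul, hP1, one_mul]
      rw [this]
      refine Finset.sum_le_sum fun t _ => mul_le_mul_of_nonneg_left ?_ (hP0 t)
      exact_mod_cast Nat.cast_le.mpr (hminD t)
    have hge : ((IE.alpha G : ℝ)) ^ n ≤ IE.Dstar U P n (gstar n) :=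
      le_trans hDg (hstar n hn g)
    have h3 : (((IE.alpha G : ℝ)) ^ n) ^ ((1 : ℝ) / n)
        ≤ IE.Dstar U P n (gstar n) ^ ((1 : ℝ) / n) :=
      Real.rpow_le_rpow (by positivity) hge (by positivity)
    rwa [rpow_pow_inv (Nat.cast_nonneg _) (by omega)] at h3
  -- boundedness
  have hbdd2 : Filter.IsBoundedUnder (· ≤ ·) Filter.atTop
      (fun n : ℕ => IE.Dstar U P n (gstar n) ^ ((1 : ℝ) / n)) := by
    refine Filter.isBoundedUnder_of ⟨max (Fintype.card X : ℝ) 1, fun n => ?_⟩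
    rcases Nat.eq_zero_or_pos n with hn | hn
    · subst hn
      simp [Real.rpow_zero]
    · have h1 : IE.Dstar U P n (gstar n) ^ ((1 : ℝ) / n)
          ≤ ((Fintype.card X : ℝ) ^ n) ^ ((1 : ℝ) / n) :=
        Real.rpow_le_rpow (IEAux.dstar_nonneg U P hP0 n (gstar n))
          (IEAux.dstar_le U P hP0 hP1 n (gstar n)) (by positivity)
      rw [rpow_pow_inv (Nat.cast_nonneg _) (by omega)] at h1
      exact le_trans h1 (le_max_left _ _)
  refine Filter.le_limsup_of_frequently_le ?_ hbdd2
  exact ((Filter.eventually_atTop.mpr ⟨1, fun n hn => hmain n hn⟩)).frequently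
end
end

section
/- (Theorem 3, upper bound.) Let λ* ∈ Λ and suppose that α(G_λ^n) ≤ α(G_{λ*}^n) for every λ ∈ Λ and every n ≥ 1, and that the limit Ξ = lim_{n→∞} α(G_{λ*}^n)^{1/n} exists. Then for every sequence (g_n*)_{n≥1} of Stackelberg equilibrium strategies of the receiver, limsup_{n→∞} R(g_n*) ≤ Ξ. -/
noncomputable section

open IE

lemma aux_no_adj {X Λ : Type*} [Fintype X] (U : X → X → Λ → ℝ) (n : ℕ)
    (g : (Fin n → X) → (Fin n → X)) (t : Λ)
    (s₀ : (Fin n → X) → (Fin n → X)) (hs₀ : s₀ ∈ BR U n g t)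
    (hmin : (Drec n g s₀).ncard = minD U n g t)
    (x y : Fin n → X) (hx : x ∈ Drec n g s₀) (hy : y ∈ Drec n g s₀)
    (hne : x ≠ y) (hle : Un U n x x t ≤ Un U n y x t) : False := by
  classical
  have hgx : g (s₀ x) = x := hx
  have hgy : g (s₀ y) = y := hy
  have hge : Un U n x x t ≥ Un U n y x t := by
    have := hs₀ x (fun _ => s₀ y)
    rwa [hgx, hgy] at this
  have heq : Un U n y x t = Un U n x x t := le_antisymm hge hle
  set s'' := Function.update s₀ x (s₀ y) with hs''
  have hs''BR : s'' ∈ BR U n g t := by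
    intro z s'
    by_cases hz : z = x
    · subst hz
      have h1 : s'' z = s₀ y := Function.update_self _ _ _
      rw [h1, hgy]
      calc Un U n y z t = Un U n (g (s₀ z)) z t := by rw [hgx]; exact heq
        _ ≥ Un U n (g (s' z)) z t := hs₀ z s'
    · rw [show s'' z = s₀ z from Function.update_of_ne hz _ _]
      exact hs₀ z s'
  have hsub : Drec n g s'' ⊂ Drec n g s₀ := by
    constructor
    · intro z hz
      by_cases hzx : z = x
      · exfalso
        subst hzx
        have h2 : g (s'' z) = y := by
          rw [show s'' z = s₀ y from Function.update_self _ _ _, hgy]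
        have h3 : g (s'' z) = z := hz
        exact hne (h3 ▸ h2 ▸ rfl : z = y)
      · have h4 : s'' z = s₀ z := Function.update_of_ne hzx _ _
        have h3 : g (s'' z) = z := hz
        rw [h4] at h3
        exact h3
    · intro hcon
      have h3 : g (s'' x) = x := hcon hx
      rw [show s'' x = s₀ y from Function.update_self _ _ _, hgy] at h3
      exact hne h3.symm
  have hlt : (Drec n g s'').ncard < (Drec n g s₀).ncard :=
    Set.ncard_lt_ncard hsub (Set.toFinite _)
  have hle' : minD U n g t ≤ (Drec n g s'').ncard :=
    Nat.sInf_le ⟨s'', hs''BR, rfl⟩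
  omega

lemma ncard_le_alpha {V : Type*} [Fintype V] (G : SimpleGraph V) (s : Set V)
    (hs : IsIndep G s) : s.ncard ≤ alpha G := by
  have hbdd : BddAbove {k | ∃ s : Set V, IsIndep G s ∧ s.ncard = k} := by
    refine ⟨Fintype.card V, ?_⟩
    rintro k ⟨s, -, rfl⟩
    calc s.ncard ≤ (Set.univ : Set V).ncard :=
          Set.ncard_le_ncard (Set.subset_univ s) Set.finite_univ
      _ = Fintype.card V := by simp [Set.ncard_univ, Nat.card_eq_fintype_card]
  exact le_csSup hbdd ⟨s, hs, rfl⟩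

lemma minD_le_alpha {X Λ : Type*} [Fintype X] (U : X → X → Λ → ℝ) (n : ℕ)
    (g : (Fin n → X) → (Fin n → X)) (t : Λ) :
    minD U n g t ≤ alpha (senderGraph U n t) := by
  by_cases hBR : (BR U n g t).Nonempty
  · have hne : ((fun s => (Drec n g s).ncard) '' BR U n g t).Nonempty := hBR.image _
    have hmem : minD U n g t ∈ (fun s => (Drec n g s).ncard) '' BR U n g t :=
      Nat.sInf_mem hne
    obtain ⟨s₀, hs₀, hcard⟩ := hmem
    have hindep : IsIndep (senderGraph U n t) (Drec n g s₀) := by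
      intro x hx y hy hadj
      obtain ⟨hnexy, hor⟩ := hadj
      rcases hor with h | h
      · exact aux_no_adj U n g t s₀ hs₀ hcard x y hx hy hnexy h
      · exact aux_no_adj U n g t s₀ hs₀ hcard y x hy hx hnexy.symm h
    rw [← hcard]
    exact ncard_le_alpha _ _ hindep
  · have : (fun s => (Drec n g s).ncard) '' BR U n g t = ∅ := by
      rw [Set.image_eq_empty]
      exact Set.not_nonempty_iff_eq_empty.mp hBR
    simp [minD, this]

lemma dstar_le_alpha {X Λ : Type*} [Fintype X] [Fintype Λ]
    (U : X → X → Λ → ℝ) (P : Λ → ℝ) (hP0 : ∀ t, 0 ≤ P t) (hP1 : ∑ t, P t = 1)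
    (ts : Λ) (n : ℕ)
    (hdomn : ∀ t : Λ, IE.alpha (IE.senderGraph U n t) ≤ IE.alpha (IE.senderGraph U n ts))
    (g : (Fin n → X) → (Fin n → X)) :
    IE.Dstar U P n g ≤ (IE.alpha (IE.senderGraph U n ts) : ℝ) := by
  have h1 : ∀ t : Λ, P t * (IE.minD U n g t : ℝ)
      ≤ P t * (IE.alpha (IE.senderGraph U n ts) : ℝ) := by
    intro t
    apply mul_le_mul_of_nonneg_left _ (hP0 t)
    exact_mod_cast (minD_le_alpha U n g t).trans (hdomn t)
  calc IE.Dstar U P n g ≤ ∑ t, P t * (IE.alpha (IE.senderGraph U n ts) : ℝ) :=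
        Finset.sum_le_sum (fun t _ => h1 t)
    _ = (IE.alpha (IE.senderGraph U n ts) : ℝ) := by
        rw [← Finset.sum_mul, hP1, one_mul]

lemma dstar_nonneg {X Λ : Type*} [Fintype X] [Fintype Λ]
    (U : X → X → Λ → ℝ) (P : Λ → ℝ) (hP0 : ∀ t, 0 ≤ P t) (n : ℕ)
    (g : (Fin n → X) → (Fin n → X)) : 0 ≤ IE.Dstar U P n g :=
  Finset.sum_nonneg (fun t _ => mul_nonneg (hP0 t) (Nat.cast_nonneg _))

/-- Theorem 3, upper bound: if `α(G_λ^n) ≤ α(G_{λ*}^n)` for all `λ`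
and `n ≥ 1` and `α(G_{λ*}^n)^{1/n} → Ξ`, then for any sequence of Stackelberg
equilibrium strategies, `limsup_n R(g_n*) ≤ Ξ`. -/
theorem stmt15 {X Λ : Type*} [Fintype X] [Nonempty X] [Fintype Λ] [Nonempty Λ]
    (U : X → X → Λ → ℝ) (P : Λ → ℝ) (hP0 : ∀ t, 0 ≤ P t) (hP1 : ∑ t, P t = 1)
    (ts : Λ)
    (hdom : ∀ t : Λ, ∀ n : ℕ, 1 ≤ n →
      IE.alpha (IE.senderGraph U n t) ≤ IE.alpha (IE.senderGraph U n ts))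
    (Xi : ℝ)
    (hXi : Filter.Tendsto
      (fun n : ℕ => (IE.alpha (IE.senderGraph U n ts) : ℝ) ^ ((1 : ℝ) / n))
      Filter.atTop (nhds Xi))
    (gstar : ∀ n : ℕ, (Fin n → X) → (Fin n → X))
    (hstar : ∀ n : ℕ, 1 ≤ n → ∀ g : (Fin n → X) → (Fin n → X),
      IE.Dstar U P n g ≤ IE.Dstar U P n (gstar n)) :
    Filter.limsup (fun n : ℕ => IE.Dstar U P n (gstar n) ^ ((1 : ℝ) / n)) Filter.atTop
      ≤ Xi := by
  have hfb : ∀ᶠ n in Filter.atTop,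
      IE.Dstar U P n (gstar n) ^ ((1 : ℝ) / n)
      ≤ (IE.alpha (IE.senderGraph U n ts) : ℝ) ^ ((1 : ℝ) / n) := by
    filter_upwards [Filter.eventually_ge_atTop 1] with n hn
    exact Real.rpow_le_rpow (dstar_nonneg U P hP0 n (gstar n))
      (dstar_le_alpha U P hP0 hP1 ts n (fun t => hdom t n hn) (gstar n))
      (by positivity)
  have hcf : Filter.IsCoboundedUnder (· ≤ ·) Filter.atTop
      (fun n : ℕ => IE.Dstar U P n (gstar n) ^ ((1 : ℝ) / n)) := by
    exact Filter.isCoboundedUnder_le_of_le Filter.atTop (x := (0 : ℝ))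
      (fun n => Real.rpow_nonneg (dstar_nonneg U P hP0 n (gstar n)) _)
  have hbb : Filter.IsBoundedUnder (· ≤ ·) Filter.atTop
      (fun n : ℕ => (IE.alpha (IE.senderGraph U n ts) : ℝ) ^ ((1 : ℝ) / n)) :=
    hXi.isBoundedUnder_le
  calc Filter.limsup (fun n : ℕ => IE.Dstar U P n (gstar n) ^ ((1 : ℝ) / n)) Filter.atTop
      ≤ Filter.limsup
          (fun n : ℕ => (IE.alpha (IE.senderGraph U n ts) : ℝ) ^ ((1 : ℝ) / n))
          Filter.atTop := Filter.limsup_le_limsup hfb hcf hbb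
    _ = Xi := hXi.limsup_eq
end
end

section
/- Fix λ ∈ Λ. For all m, n ≥ 1, the independence numbers of the sender graphs are supermultiplicative: α(G_λ^{m+n}) ≥ α(G_λ^m)·α(G_λ^n). (If I_m is an independent set in G_λ^m and I_n is an independent set in G_λ^n, then the set of concatenations {x·y : x ∈ I_m, y ∈ I_n} is an independent set in G_λ^{m+n}.) -/
noncomputable section

open Finset in
private lemma sum_append_split {X Λ : Type*} (U : X → X → Λ → ℝ) (t : Λ) {m n : ℕ}
    (a a' : Fin m → X) (b b' : Fin n → X) :
    ∑ i : Fin (m + n), U (Fin.append a b i) (Fin.append a' b' i) t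
      = (∑ i : Fin m, U (a i) (a' i) t) + ∑ i : Fin n, U (b i) (b' i) t := by
  rw [Fin.sum_univ_add]
  simp [Fin.append_left, Fin.append_right]

private lemma key_indep {X Λ : Type*} [Fintype X] (U : X → X → Λ → ℝ) (t : Λ) {k : ℕ}
    (I : Set (Fin k → X)) (hI : IE.IsIndep (IE.senderGraph U k t) I)
    {a a' : Fin k → X} (ha : a ∈ I) (ha' : a' ∈ I) :
    (∑ i, U (a' i) (a i) t) ≤ (∑ i, U (a i) (a i) t) ∧
    (a ≠ a' → (∑ i, U (a' i) (a i) t) < (∑ i, U (a i) (a i) t)) := by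
  by_cases hk : k = 0
  · subst hk
    refine ⟨le_of_eq (by simp), fun hne => absurd (funext fun i => i.elim0) hne⟩
  have hkpos : (0 : ℝ) < (k : ℝ) := by positivity
  by_cases hne : a = a'
  · subst hne
    exact ⟨le_refl _, fun h => absurd rfl h⟩
  · have hnadj := hI ha ha'
    have hnadj' : ¬ (a ≠ a' ∧ (IE.Un U k a a t ≤ IE.Un U k a' a t ∨
        IE.Un U k a' a' t ≤ IE.Un U k a a' t)) := hnadj
    push_neg at hnadj'
    have h1 : IE.Un U k a' a t < IE.Un U k a a t := (hnadj' hne).1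
    rw [IE.Un, IE.Un] at h1
    have h2 : (∑ i, U (a' i) (a i) t) < (∑ i, U (a i) (a i) t) := by
      have hinv : (0 : ℝ) < 1 / (k : ℝ) := by positivity
      exact (mul_lt_mul_iff_right₀ hinv).mp h1
    exact ⟨le_of_lt h2, fun _ => h2⟩

private lemma append_injective {X : Type*} {m n : ℕ} :
    Function.Injective (fun p : (Fin m → X) × (Fin n → X) => Fin.append p.1 p.2) := by
  rintro ⟨a, b⟩ ⟨a', b'⟩ h
  simp only [Prod.mk.injEq]
  constructor
  · funext i
    have := congrFun h (Fin.castAdd n i)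
    simpa [Fin.append_left] using this
  · funext i
    have := congrFun h (Fin.natAdd m i)
    simpa [Fin.append_right] using this

/-- the independence numbers of the sender graphs are
supermultiplicative, `α(G_λ^{m+n}) ≥ α(G_λ^m)·α(G_λ^n)`; indeed concatenations of
independent sets are independent. -/
theorem stmt16 {X Λ : Type*} [Fintype X] [Nonempty X] [Fintype Λ] [Nonempty Λ]
    (U : X → X → Λ → ℝ) (t : Λ) (m n : ℕ) (hm : 1 ≤ m) (hn : 1 ≤ n) :
    IE.alpha (IE.senderGraph U m t) * IE.alpha (IE.senderGraph U n t)
      ≤ IE.alpha (IE.senderGraph U (m + n) t) ∧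
    ∀ Im : Set (Fin m → X), ∀ In : Set (Fin n → X),
      IE.IsIndep (IE.senderGraph U m t) Im →
      IE.IsIndep (IE.senderGraph U n t) In →
      IE.IsIndep (IE.senderGraph U (m + n) t)
        (Set.image2 (fun a b => Fin.append a b) Im In) := by
  classical
  -- Part 2 first
  have indep : ∀ Im : Set (Fin m → X), ∀ In : Set (Fin n → X),
      IE.IsIndep (IE.senderGraph U m t) Im →
      IE.IsIndep (IE.senderGraph U n t) In →
      IE.IsIndep (IE.senderGraph U (m + n) t)
        (Set.image2 (fun a b => Fin.append a b) Im In) := by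
    intro Im In hIm hIn
    rintro x hx y hy hadj
    obtain ⟨a, ha, b, hb, rfl⟩ := hx
    obtain ⟨a', ha', b', hb', rfl⟩ := hy
    obtain ⟨hne, hor⟩ := hadj
    have hpair : (a, b) ≠ (a', b') := by
      intro h; exact hne (by rw [show a = a' from congrArg Prod.fst h,
        show b = b' from congrArg Prod.snd h])
    have hmn : (0 : ℝ) < 1 / ((m + n : ℕ) : ℝ) := by positivity
    have hcomp : a ≠ a' ∨ b ≠ b' := by
      by_contra hc; push_neg at hc; exact hpair (by rw [hc.1, hc.2])
    have hka := key_indep U t Im hIm ha ha'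
    have hka' := key_indep U t Im hIm ha' ha
    have hkb := key_indep U t In hIn hb hb'
    have hkb' := key_indep U t In hIn hb' hb
    rcases hor with h | h
    · rw [IE.Un, IE.Un] at h
      have hsum := (mul_le_mul_iff_right₀ hmn).mp h
      rw [sum_append_split, sum_append_split] at hsum
      rcases hcomp with hc | hc
      · exact absurd hsum (not_le.mpr (add_lt_add_of_lt_of_le (hka.2 hc) hkb.1))
      · exact absurd hsum (not_le.mpr (add_lt_add_of_le_of_lt hka.1 (hkb.2 hc)))
    · rw [IE.Un, IE.Un] at h
      have hsum := (mul_le_mul_iff_right₀ hmn).mp h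
      rw [sum_append_split, sum_append_split] at hsum
      rcases hcomp with hc | hc
      · exact absurd hsum (not_le.mpr (add_lt_add_of_lt_of_le (hka'.2 (Ne.symm hc)) hkb'.1))
      · exact absurd hsum (not_le.mpr (add_lt_add_of_le_of_lt hka'.1 (hkb'.2 (Ne.symm hc))))
  refine ⟨?_, indep⟩
  -- Part 1
  have hbdd : ∀ (k : ℕ) , BddAbove {j | ∃ s : Set (Fin k → X),
      IE.IsIndep (IE.senderGraph U k t) s ∧ s.ncard = j} := by
    intro k
    refine ⟨Fintype.card (Fin k → X), ?_⟩
    rintro j ⟨s, -, rfl⟩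
    calc s.ncard ≤ (Set.univ : Set (Fin k → X)).ncard :=
          Set.ncard_le_ncard (Set.subset_univ s) Set.finite_univ
      _ = Fintype.card (Fin k → X) := by rw [Set.ncard_univ, Nat.card_eq_fintype_card]
  have hne : ∀ (k : ℕ), ({j | ∃ s : Set (Fin k → X),
      IE.IsIndep (IE.senderGraph U k t) s ∧ s.ncard = j} : Set ℕ).Nonempty := by
    intro k
    exact ⟨0, ∅, fun x hx => absurd hx (Set.notMem_empty x), Set.ncard_empty _⟩
  obtain ⟨Im, hImI, hImc⟩ := Nat.sSup_mem (hne m) (hbdd m)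
  obtain ⟨In, hInI, hInc⟩ := Nat.sSup_mem (hne n) (hbdd n)
  have hcard : (Set.image2 (fun a b => Fin.append a b) Im In).ncard
      = Im.ncard * In.ncard := by
    rw [← Set.image_prod, Set.ncard_image_of_injective _ append_injective,
      ← Nat.card_coe_set_eq, ← Nat.card_coe_set_eq, ← Nat.card_coe_set_eq,
      Nat.card_congr (Equiv.Set.prod Im In), Nat.card_prod]
  have hmem : IE.alpha (IE.senderGraph U m t) * IE.alpha (IE.senderGraph U n t)
      ∈ {j | ∃ s : Set (Fin (m + n) → X),
        IE.IsIndep (IE.senderGraph U (m + n) t) s ∧ s.ncard = j} := by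
    refine ⟨Set.image2 (fun a b => Fin.append a b) Im In, indep Im In hImI hInI, ?_⟩
    rw [hcard, hImc, hInc]; rfl
  exact le_csSup (hbdd (m + n)) hmem
end
end
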